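/- Let C and D be categories and F, G : C → D functors. Then F and G are naturally isomorphic if and only if the comma categories (F ↓ D) and (G ↓ D) are equivalent as categories over C × D (i.e., there is an equivalence commuting with the projections sending (X, A, η) to (X, A)). -/

import Mathlib

open CategoryTheory

section Aux

variable {C : Type u₁} {D : Type u₂} [Category.{v₁} C] [Category.{v₂} D]

/-- The canonical functor `C ⥤ Comma F (𝟭 D)` sending `X` to `(X, F X, 𝟙)`. -/
@[simps]
def commaSection (F : C ⥤ D) : C ⥤ Comma F (𝟭 D) where
  obj X := ⟨X, F.obj X, 𝟙 _⟩
  map f := ⟨f, F.map f, by simp⟩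

/-- The canonical section is left adjoint to the first projection. -/
def commaSectionAdj (F : C ⥤ D) : commaSection F ⊣ Comma.fst F (𝟭 D) :=
  Adjunction.mkOfHomEquiv
    { homEquiv := fun X c =>
        { toFun := fun m => m.left
          invFun := fun f => ⟨f, F.map f ≫ c.hom, by erw [Category.id_comp]; rfl⟩
          left_inv := fun m => by
            have := m.w
            simp only [Functor.id_obj, commaSection_obj_left, commaSection_obj_right,
              commaSection_obj_hom, Functor.id_map, Category.id_comp] at this
            ext
            · rfl
            · erw [Category.id_comp] at this; exact this
          right_inv := fun f => rfl }
      homEquiv_naturality_left_symm := fun f g => by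
        ext
        · rfl
        · show F.map (f ≫ g) ≫ _ = F.map f ≫ F.map g ≫ _
          rw [F.map_comp, Category.assoc]
      homEquiv_naturality_right := fun f g => rfl }

/-- Extract an iso of first components from an iso in a product category. -/
@[simps]
def prodIsoFst {X Y : C × D} (i : X ≅ Y) : X.1 ≅ Y.1 where
  hom := i.hom.1
  inv := i.inv.1
  hom_inv_id := congrArg Prod.fst i.hom_inv_id
  inv_hom_id := congrArg Prod.fst i.inv_hom_id

/-- Extract an iso of second components from an iso in a product category. -/
@[simps]
def prodIsoSnd {X Y : C × D} (i : X ≅ Y) : X.2 ≅ Y.2 where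
  hom := i.hom.2
  inv := i.inv.2
  hom_inv_id := congrArg Prod.snd i.hom_inv_id
  inv_hom_id := congrArg Prod.snd i.inv_hom_id

end Aux

/-- Functors `F, G : C ⥤ D` are naturally isomorphic if and only if the comma
categories `(F ↓ D)` and `(G ↓ D)` are equivalent as categories over `C × D`, where the
projection sends `(X, A, η : F X ⟶ A)` to `(X, A)`. -/
theorem iso_iff_comma_equivalence_over_prod {C : Type u₁} {D : Type u₂}
    [Category.{v₁} C] [Category.{v₂} D] (F G : C ⥤ D) :
    Nonempty (F ≅ G) ↔
      ∃ e : Comma F (𝟭 D) ≌ Comma G (𝟭 D),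
        Nonempty (e.functor ⋙ (Comma.fst G (𝟭 D)).prod' (Comma.snd G (𝟭 D)) ≅
          (Comma.fst F (𝟭 D)).prod' (Comma.snd F (𝟭 D))) := by
  constructor
  · rintro ⟨i⟩
    refine ⟨Comma.mapLeftIso (𝟭 D) i, ⟨NatIso.ofComponents (fun c => Iso.refl _) ?_⟩⟩
    intro c c' f
    ext <;> simp
  · rintro ⟨e, ⟨I⟩⟩
    -- isos between the compositions with the two projections
    let I1 : e.functor ⋙ Comma.fst G (𝟭 D) ≅ Comma.fst F (𝟭 D) :=
      NatIso.ofComponents (fun c => prodIsoFst (I.app c))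
        (fun f => congrArg Prod.fst (I.hom.naturality f))
    let I2 : e.functor ⋙ Comma.snd G (𝟭 D) ≅ Comma.snd F (𝟭 D) :=
      NatIso.ofComponents (fun c => prodIsoSnd (I.app c))
        (fun f => congrArg Prod.snd (I.hom.naturality f))
    let J1 : e.inverse ⋙ Comma.fst F (𝟭 D) ≅ Comma.fst G (𝟭 D) :=
      Functor.isoWhiskerLeft e.inverse I1.symm ≪≫ (Functor.associator _ _ _).symm ≪≫
        Functor.isoWhiskerRight e.counitIso (Comma.fst G (𝟭 D)) ≪≫ Functor.leftUnitor _
    let A1 : (commaSection F ⋙ e.functor) ⊣ Comma.fst G (𝟭 D) :=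
      ((commaSectionAdj F).comp e.toAdjunction).ofNatIsoRight J1
    let K : commaSection F ⋙ e.functor ≅ commaSection G :=
      A1.leftAdjointUniq (commaSectionAdj G)
    let sF : commaSection F ⋙ Comma.snd F (𝟭 D) ≅ F :=
      NatIso.ofComponents (fun X => Iso.refl _) (by intro X Y f; erw [Category.comp_id, Category.id_comp]; rfl)
    let sG : commaSection G ⋙ Comma.snd G (𝟭 D) ≅ G :=
      NatIso.ofComponents (fun X => Iso.refl _) (by intro X Y f; erw [Category.comp_id, Category.id_comp]; rfl)
    exact ⟨sF.symm ≪≫ Functor.isoWhiskerLeft (commaSection F) I2.symm ≪≫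
      (Functor.associator _ _ _).symm ≪≫ Functor.isoWhiskerRight K (Comma.snd G (𝟭 D)) ≪≫ sG⟩
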